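/- Let γ > 1 and ℓ := 2/(γ−1). For every (V₋, C₋) ∈ ℝ² with 0 < C₋ < 1+V₋, there exists a unique (V₊, C₊) ∈ ℝ² with 0 < 1+V₊ < C₊ such that the pair satisfies the self-similar Rankine–Hugoniot relations. Conversely, for every (V₊, C₊) with 0 < 1+V₊ < C₊ there exists a unique (V₋, C₋) with 0 < C₋ < 1+V₋ such that the pair satisfies the self-similar Rankine–Hugoniot relations. (These are admissible self-similar 1-shocks in the case ξ̄/λ < 0, with left states in T¹₋ := {0 < C < 1+V} and right states in T¹₊ := {0 < 1+V < C}.) -/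

import Mathlib

/-- The self-similar Rankine–Hugoniot relations for the 1-d isentropic Euler
system (with `ℓ = 2/(γ−1)`), relating a left state `Pm = (V₋, C₋)` and a right
state `Pp = (V₊, C₊)`. -/
def RH (γ : ℝ) (Pm Pp : ℝ × ℝ) : Prop :=
  |Pm.2| ^ (2 / (γ - 1)) * (1 + Pm.1) = |Pp.2| ^ (2 / (γ - 1)) * (1 + Pp.1) ∧
  |Pm.2| ^ (2 / (γ - 1)) * ((1 + Pm.1) ^ 2 + Pm.2 ^ 2 / γ)
    = |Pp.2| ^ (2 / (γ - 1)) * ((1 + Pp.1) ^ 2 + Pp.2 ^ 2 / γ)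

open Real Set

/-! ### Auxiliary material for the Rankine–Hugoniot analysis -/

/-- Auxiliary profile function: with mass flux `m`, momentum as a function of the
sound-speed variable `c` is `fRH γ l m c = m² c^(−l) + c^(l+2)/γ`. -/
noncomputable def fRH (γ l m c : ℝ) : ℝ := m ^ 2 * c ^ (-l) + c ^ (l + 2) / γ

lemma rpow_cancel' {C l : ℝ} (hC : 0 < C) : C ^ l * C ^ (-l) = 1 := by
  rw [← Real.rpow_add hC]; simp

lemma rpow_succ' {C l : ℝ} (hC : 0 < C) : C ^ (l + 1) = C ^ l * C := by
  rw [Real.rpow_add hC, Real.rpow_one]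

lemma key_alg {γ C : ℝ} (hC : 0 < C) (l u : ℝ) :
    C ^ l * (u ^ 2 + C ^ 2 / γ) = (C ^ l * u) ^ 2 * C ^ (-l) + C ^ (l + 2) / γ := by
  have h1 : C ^ l * C ^ (-l) = 1 := rpow_cancel' hC
  have h2 : C ^ (l + 2) = C ^ l * C ^ 2 := by
    rw [Real.rpow_add hC, show ((2:ℝ)) = ((2:ℕ):ℝ) by norm_num, Real.rpow_natCast]
  have h3 : (C ^ l * u) ^ 2 * C ^ (-l) = (C ^ l * C ^ (-l)) * (C ^ l * u ^ 2) := by ring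
  rw [h3, h1, one_mul, h2]; ring

lemma fRH_contOn (γ l m : ℝ) : ContinuousOn (fRH γ l m) (Ioi 0) := by
  intro x hx
  have h1 : ContinuousAt (fun c : ℝ => c ^ (-l)) x :=
    Real.continuousAt_rpow_const x (-l) (Or.inl (ne_of_gt hx))
  have h2 : ContinuousAt (fun c : ℝ => c ^ (l + 2)) x :=
    Real.continuousAt_rpow_const x (l + 2) (Or.inl (ne_of_gt hx))
  exact ((continuousAt_const.mul h1).add (h2.div_const γ)).continuousWithinAt

lemma fRH_deriv (γ l m : ℝ) {x : ℝ} (hx : 0 < x) :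
    HasDerivAt (fRH γ l m) (m ^ 2 * (-l * x ^ (-l - 1)) + (l + 2) * x ^ (l + 1) / γ) x := by
  have h1 : HasDerivAt (fun c : ℝ => c ^ (-l)) (-l * x ^ (-l - 1)) x :=
    Real.hasDerivAt_rpow_const (p := -l) (Or.inl hx.ne')
  have h2 : HasDerivAt (fun c : ℝ => c ^ (l + 2)) ((l + 2) * x ^ (l + 1)) x := by
    have h := Real.hasDerivAt_rpow_const (x := x) (p := l + 2) (Or.inl hx.ne')
    have e : l + 2 - 1 = l + 1 := by ring
    rwa [e] at h
  exact (h1.const_mul (m ^ 2)).add (h2.div_const γ)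

lemma fRH_pos {γ l m : ℝ} (hγ : 0 < γ) (hm : 0 < m) {c : ℝ} (hc : 0 < c) :
    0 < fRH γ l m c := by
  have h1 := Real.rpow_pos_of_pos hc (-l)
  have h2 := Real.rpow_pos_of_pos hc (l + 2)
  have h3 := pow_pos hm 2
  unfold fRH; positivity

lemma spow' {l m : ℝ} (hl : 0 < l) (hm : 0 < m) : (m ^ ((l + 1)⁻¹) : ℝ) ^ (l + 1) = m := by
  rw [← Real.rpow_mul hm.le, inv_mul_cancel₀ (by linarith : l + 1 ≠ 0), Real.rpow_one]

lemma gt_s_iff {l m C : ℝ} (hl : 0 < l) (hm : 0 < m) (hC : 0 < C) :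
    m ^ ((l + 1)⁻¹) < C ↔ m < C ^ (l + 1) := by
  have hs : (0:ℝ) < m ^ ((l + 1)⁻¹) := Real.rpow_pos_of_pos hm _
  constructor
  · intro h
    have := Real.rpow_lt_rpow hs.le h (by linarith : (0:ℝ) < l + 1)
    rwa [spow' hl hm] at this
  · intro h
    have := Real.rpow_lt_rpow hm.le h (by positivity : (0:ℝ) < (l + 1)⁻¹)
    rwa [← Real.rpow_mul hC.le, mul_inv_cancel₀ (by linarith : l + 1 ≠ 0), Real.rpow_one] at this

lemma lt_s_iff {l m C : ℝ} (hl : 0 < l) (hm : 0 < m) (hC : 0 < C) :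
    C < m ^ ((l + 1)⁻¹) ↔ C ^ (l + 1) < m := by
  have hs : (0:ℝ) < m ^ ((l + 1)⁻¹) := Real.rpow_pos_of_pos hm _
  constructor
  · intro h
    have := Real.rpow_lt_rpow hC.le h (by linarith : (0:ℝ) < l + 1)
    rwa [spow' hl hm] at this
  · intro h
    have hCl : (0:ℝ) < C ^ (l + 1) := Real.rpow_pos_of_pos hC _
    have := Real.rpow_lt_rpow hCl.le h (by positivity : (0:ℝ) < (l + 1)⁻¹)
    rwa [← Real.rpow_mul hC.le, mul_inv_cancel₀ (by linarith : l + 1 ≠ 0), Real.rpow_one] at this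

lemma deriv_form {γ l m x : ℝ} (hγ : 0 < γ) (hγl : γ * l = l + 2) (hx : 0 < x) :
    m ^ 2 * (-l * x ^ (-l - 1)) + (l + 2) * x ^ (l + 1) / γ
      = l * ((x ^ (l + 1)) ^ 2 - m ^ 2) / x ^ (l + 1) := by
  have hA : (0:ℝ) < x ^ (l + 1) := Real.rpow_pos_of_pos hx _
  have hinv : x ^ (-l - 1) = (x ^ (l + 1))⁻¹ := by
    rw [← Real.rpow_neg hx.le]; ring_nf
  rw [hinv, ← hγl]
  field_simp
  ring

lemma fRH_mono {γ l m : ℝ} (hγ : 0 < γ) (hl : 0 < l) (hγl : γ * l = l + 2) (hm : 0 < m) :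
    StrictMonoOn (fRH γ l m) (Ici (m ^ ((l + 1)⁻¹))) := by
  have hs : (0:ℝ) < m ^ ((l + 1)⁻¹) := Real.rpow_pos_of_pos hm _
  apply strictMonoOn_of_deriv_pos (convex_Ici _)
  · exact (fRH_contOn γ l m).mono (fun x hx => lt_of_lt_of_le hs hx)
  · intro x hx
    rw [interior_Ici] at hx
    have hx0 : 0 < x := hs.trans hx
    rw [(fRH_deriv γ l m hx0).deriv, deriv_form hγ hγl hx0]
    have hA : (0:ℝ) < x ^ (l + 1) := Real.rpow_pos_of_pos hx0 _
    have hAm : m < x ^ (l + 1) := (gt_s_iff hl hm hx0).mp hx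
    apply div_pos _ hA
    apply mul_pos hl
    nlinarith

lemma fRH_anti {γ l m : ℝ} (hγ : 0 < γ) (hl : 0 < l) (hγl : γ * l = l + 2) (hm : 0 < m) :
    StrictAntiOn (fRH γ l m) (Ioc 0 (m ^ ((l + 1)⁻¹))) := by
  have hs : (0:ℝ) < m ^ ((l + 1)⁻¹) := Real.rpow_pos_of_pos hm _
  apply strictAntiOn_of_deriv_neg (convex_Ioc _ _)
  · exact (fRH_contOn γ l m).mono (fun x hx => hx.1)
  · intro x hx
    rw [interior_Ioc] at hx
    have hx0 : 0 < x := hx.1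
    rw [(fRH_deriv γ l m hx0).deriv, deriv_form hγ hγl hx0]
    have hA : (0:ℝ) < x ^ (l + 1) := Real.rpow_pos_of_pos hx0 _
    have hAm : x ^ (l + 1) < m := (lt_s_iff hl hm hx0).mp hx.2
    apply div_neg_of_neg_of_pos _ hA
    have h5 : (x ^ (l + 1)) ^ 2 - m ^ 2 < 0 := by nlinarith
    nlinarith

lemma euRight {γ l m p : ℝ} (hγ : 0 < γ) (hl : 0 < l) (hγl : γ * l = l + 2) (hm : 0 < m)
    (hp : fRH γ l m (m ^ ((l + 1)⁻¹)) < p) :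
    ∃! c : ℝ, m ^ ((l + 1)⁻¹) < c ∧ fRH γ l m c = p := by
  set s : ℝ := m ^ ((l + 1)⁻¹) with hsdef
  have hs : (0:ℝ) < s := Real.rpow_pos_of_pos hm _
  have hp0 : 0 < p := (fRH_pos hγ hm hs).trans hp
  set X : ℝ := max s ((γ * p) ^ ((l + 2)⁻¹)) with hXdef
  have hsX : s ≤ X := le_max_left _ _
  have hX0 : 0 < X := hs.trans_le hsX
  have hfX : p ≤ fRH γ l m X := by
    have hgp : 0 < γ * p := mul_pos hγ hp0
    have h1 : (γ * p) ^ ((l + 2)⁻¹) ≤ X := le_max_right _ _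
    have h2 : γ * p ≤ X ^ (l + 2) := by
      have := Real.rpow_le_rpow (Real.rpow_pos_of_pos hgp _).le h1 (by linarith : (0:ℝ) ≤ l + 2)
      rwa [← Real.rpow_mul hgp.le, inv_mul_cancel₀ (by linarith : l + 2 ≠ 0), Real.rpow_one] at this
    have h3 : p ≤ X ^ (l + 2) / γ := (le_div_iff₀ hγ).mpr (by linarith [mul_comm γ p])
    have h4 : 0 ≤ m ^ 2 * X ^ (-l) := by positivity
    unfold fRH; linarith
  have hinc : Icc (fRH γ l m s) (fRH γ l m X) ⊆ fRH γ l m '' Icc s X :=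
    intermediate_value_Icc hsX ((fRH_contOn γ l m).mono (fun x hx => hs.trans_le hx.1))
  obtain ⟨c, hc, hfc⟩ := hinc ⟨hp.le, hfX⟩
  have hcs : s < c := lt_of_le_of_ne hc.1 (fun h => hp.ne (by rw [h]; exact hfc))
  refine ⟨c, ⟨hcs, hfc⟩, ?_⟩
  rintro c' ⟨hc's, hfc'⟩
  exact (fRH_mono hγ hl hγl hm).injOn (mem_Ici.mpr hc's.le) (mem_Ici.mpr hcs.le)
    (hfc'.trans hfc.symm)

lemma euLeft {γ l m p : ℝ} (hγ : 0 < γ) (hl : 0 < l) (hγl : γ * l = l + 2) (hm : 0 < m)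
    (hp : fRH γ l m (m ^ ((l + 1)⁻¹)) < p) :
    ∃! c : ℝ, (0 < c ∧ c < m ^ ((l + 1)⁻¹)) ∧ fRH γ l m c = p := by
  set s : ℝ := m ^ ((l + 1)⁻¹) with hsdef
  have hs : (0:ℝ) < s := Real.rpow_pos_of_pos hm _
  have hp0 : 0 < p := (fRH_pos hγ hm hs).trans hp
  set ε : ℝ := min s ((m ^ 2 / p) ^ (l⁻¹)) with hεdef
  have hmp : (0:ℝ) < m ^ 2 / p := by positivity
  have hε0 : 0 < ε := lt_min hs (Real.rpow_pos_of_pos hmp _)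
  have hεs : ε ≤ s := min_le_left _ _
  have hfε : p ≤ fRH γ l m ε := by
    have h1 : ε ≤ (m ^ 2 / p) ^ (l⁻¹) := min_le_right _ _
    have h2 : ε ^ l ≤ m ^ 2 / p := by
      have := Real.rpow_le_rpow hε0.le h1 hl.le
      rwa [← Real.rpow_mul hmp.le, inv_mul_cancel₀ hl.ne', Real.rpow_one] at this
    have hεl : (0:ℝ) < ε ^ l := Real.rpow_pos_of_pos hε0 _
    have h3 : p ≤ m ^ 2 * ε ^ (-l) := by
      rw [Real.rpow_neg hε0.le]
      rw [le_div_iff₀ hp0] at h2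
      calc p = p * 1 := (mul_one p).symm
        _ = p * (ε ^ l * (ε ^ l)⁻¹) := by rw [mul_inv_cancel₀ hεl.ne']
        _ = (ε ^ l * p) * (ε ^ l)⁻¹ := by ring
        _ ≤ m ^ 2 * (ε ^ l)⁻¹ := by
            apply mul_le_mul_of_nonneg_right _ (inv_nonneg.mpr hεl.le)
            linarith
    have h4 : 0 ≤ ε ^ (l + 2) / γ := by positivity
    unfold fRH; linarith
  have hinc : Icc (fRH γ l m s) (fRH γ l m ε) ⊆ fRH γ l m '' Icc ε s :=
    intermediate_value_Icc' hεs ((fRH_contOn γ l m).mono (fun x hx => hε0.trans_le hx.1))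
  obtain ⟨c, hc, hfc⟩ := hinc ⟨hp.le, hfε⟩
  have hc0 : 0 < c := hε0.trans_le hc.1
  have hcs : c < s := lt_of_le_of_ne hc.2 (fun h => hp.ne (by rw [← h]; exact hfc))
  refine ⟨c, ⟨⟨hc0, hcs⟩, hfc⟩, ?_⟩
  rintro c' ⟨⟨hc'0, hc's⟩, hfc'⟩
  exact (fRH_anti hγ hl hγl hm).injOn ⟨hc'0, hc's.le⟩ ⟨hc0, hcs.le⟩ (hfc'.trans hfc.symm)

/-- admissible self-similar 1-shocks with `ξ̄/λ < 0`: each left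
state in `T¹₋ = {0 < C < 1+V}` has a unique right state in `T¹₊ = {0 < 1+V < C}`
satisfying the Rankine–Hugoniot relations, and conversely. -/
theorem stmt_16 (γ : ℝ) (hγ : 1 < γ) :
    (∀ Vm Cm : ℝ, 0 < Cm → Cm < 1 + Vm →
      ∃! Pp : ℝ × ℝ, (0 < 1 + Pp.1 ∧ 1 + Pp.1 < Pp.2) ∧ RH γ (Vm, Cm) Pp) ∧
    (∀ Vp Cp : ℝ, 0 < 1 + Vp → 1 + Vp < Cp →
      ∃! Pm : ℝ × ℝ, (0 < Pm.2 ∧ Pm.2 < 1 + Pm.1) ∧ RH γ Pm (Vp, Cp)) := by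
  have hγ0 : 0 < γ := by linarith
  have hγ1 : (0:ℝ) < γ - 1 := by linarith
  set l : ℝ := 2 / (γ - 1) with hldef
  have hl : 0 < l := by positivity
  have hγl : γ * l = l + 2 := by
    rw [hldef]; field_simp; ring
  constructor
  · -- forward: left state given
    intro Vm Cm hCm0 hCm
    have hVm : 0 < 1 + Vm := hCm0.trans hCm
    have hCml : (0:ℝ) < Cm ^ l := Real.rpow_pos_of_pos hCm0 _
    set m : ℝ := Cm ^ l * (1 + Vm) with hmdef
    have hm : 0 < m := mul_pos hCml hVm
    set s : ℝ := m ^ ((l + 1)⁻¹) with hsdef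
    have hs : 0 < s := Real.rpow_pos_of_pos hm _
    have hCms : Cm < s := by
      rw [hsdef, lt_s_iff hl hm hCm0, rpow_succ' hCm0, hmdef]
      exact (mul_lt_mul_iff_right₀ hCml).mpr hCm
    set p : ℝ := fRH γ l m Cm with hpdef
    have hkey : Cm ^ l * ((1 + Vm) ^ 2 + Cm ^ 2 / γ) = p := by
      rw [hpdef]
      show _ = m ^ 2 * Cm ^ (-l) + Cm ^ (l + 2) / γ
      rw [key_alg hCm0 l (1 + Vm), ← hmdef]
    have hp : fRH γ l m s < p :=
      fRH_anti hγ0 hl hγl hm ⟨hCm0, hCms.le⟩ ⟨hs, le_refl s⟩ hCms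
    obtain ⟨c, ⟨hsc, hfc⟩, hcu⟩ := euRight hγ0 hl hγl hm hp
    have hc0 : 0 < c := hs.trans hsc
    have hcl : (0:ℝ) < c ^ l := Real.rpow_pos_of_pos hc0 _
    have hcnl : (0:ℝ) < c ^ (-l) := Real.rpow_pos_of_pos hc0 _
    have hccl : c ^ l * c ^ (-l) = 1 := rpow_cancel' hc0
    have hcm : c ^ l * (m * c ^ (-l)) = m := by
      rw [show c ^ l * (m * c ^ (-l)) = m * (c ^ l * c ^ (-l)) by ring, hccl, mul_one]
    have hmc : m * c ^ (-l) < c := by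
      have h1 : m < c ^ (l + 1) := (gt_s_iff hl hm hc0).mp hsc
      rw [rpow_succ' hc0] at h1
      calc m * c ^ (-l) < (c ^ l * c) * c ^ (-l) := by
            exact mul_lt_mul_of_pos_right h1 hcnl
        _ = (c ^ l * c ^ (-l)) * c := by ring
        _ = c := by rw [hccl, one_mul]
    refine ⟨(m * c ^ (-l) - 1, c), ⟨⟨?_, ?_⟩, ?_, ?_⟩, ?_⟩
    · show (0:ℝ) < 1 + (m * c ^ (-l) - 1)
      have : 0 < m * c ^ (-l) := mul_pos hm hcnl
      linarith
    · show 1 + (m * c ^ (-l) - 1) < c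
      linarith
    · -- first RH equation
      show |Cm| ^ (2 / (γ - 1)) * (1 + Vm)
          = |c| ^ (2 / (γ - 1)) * (1 + (m * c ^ (-l) - 1))
      rw [abs_of_pos hCm0, abs_of_pos hc0, ← hldef,
        show (1:ℝ) + (m * c ^ (-l) - 1) = m * c ^ (-l) by ring, hcm, hmdef]
    · -- second RH equation
      show |Cm| ^ (2 / (γ - 1)) * ((1 + Vm) ^ 2 + Cm ^ 2 / γ)
          = |c| ^ (2 / (γ - 1)) * ((1 + (m * c ^ (-l) - 1)) ^ 2 + c ^ 2 / γ)
      rw [abs_of_pos hCm0, abs_of_pos hc0, ← hldef, hkey,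
        show (1:ℝ) + (m * c ^ (-l) - 1) = m * c ^ (-l) by ring,
        key_alg hc0 l (m * c ^ (-l)), hcm]
      exact hfc.symm
    · -- uniqueness
      rintro ⟨V, C⟩ ⟨⟨hV0, hVC⟩, hrh⟩
      obtain ⟨hrh1, hrh2⟩ := hrh
      simp only at hrh1 hrh2 hV0 hVC
      have hC0 : 0 < C := hV0.trans hVC
      have hCl : (0:ℝ) < C ^ l := Real.rpow_pos_of_pos hC0 _
      have hCCl : C ^ l * C ^ (-l) = 1 := rpow_cancel' hC0
      rw [abs_of_pos hCm0, abs_of_pos hC0, ← hldef] at hrh1 hrh2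
      have hm1 : C ^ l * (1 + V) = m := by rw [hmdef]; exact hrh1.symm
      have h1V : 1 + V = m * C ^ (-l) := by
        calc 1 + V = (C ^ l * (1 + V)) * C ^ (-l) := by
              rw [show (C ^ l * (1 + V)) * C ^ (-l) = (1 + V) * (C ^ l * C ^ (-l)) by ring,
                hCCl, mul_one]
          _ = m * C ^ (-l) := by rw [hm1]
      have hCs : s < C := by
        rw [hsdef, gt_s_iff hl hm hC0, rpow_succ' hC0]
        have h2 : m * C ^ (-l) < C := h1V ▸ hVC
        have h3 := mul_lt_mul_of_pos_right h2 hCl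
        calc m = m * (C ^ (-l) * C ^ l) := by
              rw [show C ^ (-l) * C ^ l = C ^ l * C ^ (-l) by ring, hCCl, mul_one]
          _ = (m * C ^ (-l)) * C ^ l := by ring
          _ < C * C ^ l := h3
          _ = C ^ l * C := by ring
      have hfC : fRH γ l m C = p := by
        show m ^ 2 * C ^ (-l) + C ^ (l + 2) / γ = p
        rw [← hm1, ← key_alg hC0 l (1 + V), ← hrh2, hkey]
      have hCc : C = c := hcu C ⟨hCs, hfC⟩
      have hVe : V = m * c ^ (-l) - 1 := by
        rw [← hCc]; linarith [h1V]
      simp only [Prod.mk.injEq]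
      exact ⟨hVe, hCc⟩
  · -- backward: right state given
    intro Vp Cp hVp hVC
    have hCp0 : 0 < Cp := hVp.trans hVC
    have hCpl : (0:ℝ) < Cp ^ l := Real.rpow_pos_of_pos hCp0 _
    set m : ℝ := Cp ^ l * (1 + Vp) with hmdef
    have hm : 0 < m := mul_pos hCpl hVp
    set s : ℝ := m ^ ((l + 1)⁻¹) with hsdef
    have hs : 0 < s := Real.rpow_pos_of_pos hm _
    have hCps : s < Cp := by
      rw [hsdef, gt_s_iff hl hm hCp0, rpow_succ' hCp0, hmdef]
      exact (mul_lt_mul_iff_right₀ hCpl).mpr hVC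
    set p : ℝ := fRH γ l m Cp with hpdef
    have hkey : Cp ^ l * ((1 + Vp) ^ 2 + Cp ^ 2 / γ) = p := by
      rw [hpdef]
      show _ = m ^ 2 * Cp ^ (-l) + Cp ^ (l + 2) / γ
      rw [key_alg hCp0 l (1 + Vp), ← hmdef]
    have hp : fRH γ l m s < p :=
      fRH_mono hγ0 hl hγl hm (mem_Ici.mpr (le_refl s)) (mem_Ici.mpr hCps.le) hCps
    obtain ⟨c, ⟨⟨hc0, hcs⟩, hfc⟩, hcu⟩ := euLeft hγ0 hl hγl hm hp
    have hcl : (0:ℝ) < c ^ l := Real.rpow_pos_of_pos hc0 _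
    have hcnl : (0:ℝ) < c ^ (-l) := Real.rpow_pos_of_pos hc0 _
    have hccl : c ^ l * c ^ (-l) = 1 := rpow_cancel' hc0
    have hcm : c ^ l * (m * c ^ (-l)) = m := by
      rw [show c ^ l * (m * c ^ (-l)) = m * (c ^ l * c ^ (-l)) by ring, hccl, mul_one]
    have hmc : c < m * c ^ (-l) := by
      have h1 : c ^ (l + 1) < m := (lt_s_iff hl hm hc0).mp hcs
      rw [rpow_succ' hc0] at h1
      calc c = (c ^ l * c ^ (-l)) * c := by rw [hccl, one_mul]
        _ = (c ^ l * c) * c ^ (-l) := by ring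
        _ < m * c ^ (-l) := mul_lt_mul_of_pos_right h1 hcnl
    refine ⟨(m * c ^ (-l) - 1, c), ⟨⟨hc0, ?_⟩, ?_, ?_⟩, ?_⟩
    · show c < 1 + (m * c ^ (-l) - 1)
      linarith
    · -- first RH equation
      show |c| ^ (2 / (γ - 1)) * (1 + (m * c ^ (-l) - 1))
          = |Cp| ^ (2 / (γ - 1)) * (1 + Vp)
      rw [abs_of_pos hCp0, abs_of_pos hc0, ← hldef,
        show (1:ℝ) + (m * c ^ (-l) - 1) = m * c ^ (-l) by ring, hcm, hmdef]
    · -- second RH equation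
      show |c| ^ (2 / (γ - 1)) * ((1 + (m * c ^ (-l) - 1)) ^ 2 + c ^ 2 / γ)
          = |Cp| ^ (2 / (γ - 1)) * ((1 + Vp) ^ 2 + Cp ^ 2 / γ)
      rw [abs_of_pos hCp0, abs_of_pos hc0, ← hldef, hkey,
        show (1:ℝ) + (m * c ^ (-l) - 1) = m * c ^ (-l) by ring,
        key_alg hc0 l (m * c ^ (-l)), hcm]
      exact hfc
    · -- uniqueness
      rintro ⟨V, C⟩ ⟨⟨hC0, hCV⟩, hrh⟩
      obtain ⟨hrh1, hrh2⟩ := hrh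
      simp only at hrh1 hrh2 hC0 hCV
      have hCl : (0:ℝ) < C ^ l := Real.rpow_pos_of_pos hC0 _
      have hCCl : C ^ l * C ^ (-l) = 1 := rpow_cancel' hC0
      rw [abs_of_pos hCp0, abs_of_pos hC0, ← hldef] at hrh1 hrh2
      have hm1 : C ^ l * (1 + V) = m := by rw [hmdef]; exact hrh1
      have h1V : 1 + V = m * C ^ (-l) := by
        calc 1 + V = (C ^ l * (1 + V)) * C ^ (-l) := by
              rw [show (C ^ l * (1 + V)) * C ^ (-l) = (1 + V) * (C ^ l * C ^ (-l)) by ring,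
                hCCl, mul_one]
          _ = m * C ^ (-l) := by rw [hm1]
      have hCs : C < s := by
        rw [hsdef, lt_s_iff hl hm hC0, rpow_succ' hC0]
        have h2 : C < m * C ^ (-l) := h1V ▸ hCV
        have h3 := mul_lt_mul_of_pos_right h2 hCl
        calc C ^ l * C = C * C ^ l := by ring
          _ < (m * C ^ (-l)) * C ^ l := h3
          _ = m * (C ^ l * C ^ (-l)) := by ring
          _ = m := by rw [hCCl, mul_one]
      have hfC : fRH γ l m C = p := by
        show m ^ 2 * C ^ (-l) + C ^ (l + 2) / γ = p
        rw [← hm1, ← key_alg hC0 l (1 + V), hrh2, hkey]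
      have hCc : C = c := hcu C ⟨⟨hC0, hCs⟩, hfC⟩
      have hVe : V = m * c ^ (-l) - 1 := by
        rw [← hCc]; linarith [h1V]
      simp only [Prod.mk.injEq]
      exact ⟨hVe, hCc⟩
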